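/- arXiv:2510.00420 — 6 statements merged into one kernel-verified Lean document; each statement's English description precedes it below -/
import Mathlib

section
/- Let m > 0 and 0 < β < m. Then there exists L₀ > 0 (depending only on β and m) such that for every L ≥ L₀, every μ ≥ m², all real numbers a⁺, a⁻, and all natural numbers t₁ < t₂ < t₃, the function f(r) = a⁺·exp(√μ·r) + a⁻·exp(−√μ·r) satisfies ∫_{t₂L}^{(t₂+1)L} f(r)² dr ≤ exp(−2βL)·( ∫_{t₁L}^{(t₁+1)L} f(r)² dr + ∫_{t₃L}^{(t₃+1)L} f(r)² dr ). -/
open MeasureTheory Real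


lemma mode_integral (s aP aM a b : ℝ) (hs : 0 < s) :
    (∫ r in a..b, (aP * Real.exp (s * r) + aM * Real.exp (-s * r)) ^ 2) =
      aP ^ 2 / (2 * s) * (Real.exp (2 * s * b) - Real.exp (2 * s * a))
        + 2 * aP * aM * (b - a)
        + aM ^ 2 / (2 * s) * (Real.exp (-(2 * s * a)) - Real.exp (-(2 * s * b))) := by
  have key : ∀ r : ℝ, HasDerivAt
      (fun y => aP ^ 2 / (2 * s) * Real.exp (2 * s * y) + 2 * aP * aM * y
        - aM ^ 2 / (2 * s) * Real.exp (-(2 * s * y)))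
      ((aP * Real.exp (s * r) + aM * Real.exp (-s * r)) ^ 2) r := by
    intro r
    have h1 : HasDerivAt (fun y : ℝ => Real.exp (2 * s * y)) (Real.exp (2 * s * r) * (2 * s)) r := by
      simpa using (((hasDerivAt_id r).const_mul (2 * s)).exp)
    have h2 : HasDerivAt (fun y : ℝ => Real.exp (-(2 * s * y))) (Real.exp (-(2 * s * r)) * (-(2 * s))) r := by
      simpa using (((hasDerivAt_id r).const_mul (2 * s)).neg.exp)
    have h := ((h1.const_mul (aP ^ 2 / (2 * s))).add ((hasDerivAt_id r).const_mul (2 * aP * aM))).sub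
      (h2.const_mul (aM ^ 2 / (2 * s)))
    convert h using 1
    case e'_4 => rfl
    case e'_5 => rfl
    case e'_8 => rfl
    have e1 : Real.exp (s * r) * Real.exp (-(s * r)) = 1 := by
      rw [← Real.exp_add]; simp
    have e2 : Real.exp (2 * s * r) = Real.exp (s * r) * Real.exp (s * r) := by
      rw [← Real.exp_add]; ring_nf
    have e3 : Real.exp (-(2 * s * r)) = Real.exp (-(s * r)) * Real.exp (-(s * r)) := by
      rw [← Real.exp_add]; ring_nf
    rw [e2, e3, show (-s * r) = -(s*r) from by ring]
    field_simp
    linear_combination (2 * aP * aM) * e1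
  have hint : IntervalIntegrable (fun r => (aP * Real.exp (s * r) + aM * Real.exp (-s * r)) ^ 2)
      MeasureTheory.volume a b := by
    apply Continuous.intervalIntegrable; continuity
  have := intervalIntegral.integral_eq_sub_of_hasDerivAt (fun x _ => key x) hint
  rw [this]; ring

set_option maxHeartbeats 1000000 in
/-- Single-mode three circles theorem: for each eigenvalue `μ ≥ m²`, the mode
`f(r) = a⁺ e^{√μ r} + a⁻ e^{-√μ r}` has its squared `L²`-norm on the middle tube
exponentially dominated by the norms on the outer tubes, once `L` is large. -/
theorem single_mode_three_circles (m β : ℝ) (hm : 0 < m) (hβ : 0 < β) (hβm : β < m) :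
    ∃ L₀ > 0, ∀ L ≥ L₀, ∀ μ : ℝ, m ^ 2 ≤ μ → ∀ aP aM : ℝ, ∀ t₁ t₂ t₃ : ℕ,
      t₁ < t₂ → t₂ < t₃ →
      (∫ r in ((t₂ : ℝ) * L)..(((t₂ : ℝ) + 1) * L),
          (aP * Real.exp (Real.sqrt μ * r) + aM * Real.exp (-(Real.sqrt μ) * r)) ^ 2) ≤
        Real.exp (-(2 * β * L)) *
          ((∫ r in ((t₁ : ℝ) * L)..(((t₁ : ℝ) + 1) * L),
              (aP * Real.exp (Real.sqrt μ * r) + aM * Real.exp (-(Real.sqrt μ) * r)) ^ 2) +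
           (∫ r in ((t₃ : ℝ) * L)..(((t₃ : ℝ) + 1) * L),
              (aP * Real.exp (Real.sqrt μ * r) + aM * Real.exp (-(Real.sqrt μ) * r)) ^ 2)) := by
  have hmβ : 0 < m - β := by linarith
  have h1m : 0 < 1 / m := div_pos one_pos hm
  have h4m : 0 < 4 / (m * (m - β)) := div_pos (by norm_num) (mul_pos hm hmβ)
  refine ⟨1 + 1 / m + 4 / (m * (m - β)), by linarith, ?_⟩
  intro L hL μ hμ aP aM t₁ t₂ t₃ h12 h23
  set s := Real.sqrt μ with hsdef
  have hms : m ≤ s := by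
    have h : m = Real.sqrt (m ^ 2) := by rw [Real.sqrt_sq hm.le]
    rw [h]; exact Real.sqrt_le_sqrt hμ
  have hs0 : 0 < s := lt_of_lt_of_le hm hms
  have hL1 : 1 ≤ L := by linarith
  have hL0 : 0 < L := by linarith
  have hLm : 1 ≤ m * L := by
    have h : 1 / m ≤ L := by linarith
    calc (1:ℝ) = m * (1 / m) := by field_simp
    _ ≤ m * L := mul_le_mul_of_nonneg_left h hm.le
  have hL4 : 4 ≤ m * (m - β) * L ^ 2 := by
    have hmb : 0 < m * (m - β) := mul_pos hm hmβ
    have h4 : 4 / (m * (m - β)) ≤ L := by linarith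
    rw [div_le_iff₀ hmb] at h4
    have hint : 0 ≤ m * (m - β) * L * (L - 1) :=
      mul_nonneg (mul_nonneg (mul_pos hm hmβ).le hL0.le) (by linarith)
    nlinarith [h4, hint]
  rw [mode_integral s aP aM _ _ hs0, mode_integral s aP aM _ _ hs0,
    mode_integral s aP aM _ _ hs0]
  have hT12 : (t₁ : ℝ) + 1 ≤ (t₂ : ℝ) := by exact_mod_cast h12
  have hT23 : (t₂ : ℝ) + 1 ≤ (t₃ : ℝ) := by exact_mod_cast h23
  have idE : ∀ t : ℕ, Real.exp (2 * s * (((t:ℝ) + 1) * L))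
      = Real.exp (s * ((t:ℝ) * L)) ^ 2 * Real.exp (s * L) ^ 2 := by
    intro t
    rw [show 2 * s * (((t:ℝ) + 1) * L) = (s * ((t:ℝ) * L) + s * ((t:ℝ) * L)) + (s * L + s * L) from by ring,
      Real.exp_add, Real.exp_add, Real.exp_add]
    ring
  have idE0 : ∀ t : ℕ, Real.exp (2 * s * ((t:ℝ) * L)) = Real.exp (s * ((t:ℝ) * L)) ^ 2 := by
    intro t
    rw [show 2 * s * ((t:ℝ) * L) = s * ((t:ℝ) * L) + s * ((t:ℝ) * L) from by ring, Real.exp_add]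
    ring
  have idD : ∀ t : ℕ, Real.exp (-(2 * s * (((t:ℝ) + 1) * L)))
      = Real.exp (-(s * ((t:ℝ) * L))) ^ 2 * Real.exp (-(s * L)) ^ 2 := by
    intro t
    rw [show -(2 * s * (((t:ℝ) + 1) * L)) = (-(s * ((t:ℝ) * L)) + -(s * ((t:ℝ) * L))) + (-(s * L) + -(s * L)) from by ring,
      Real.exp_add, Real.exp_add, Real.exp_add]
    ring
  have idD0 : ∀ t : ℕ, Real.exp (-(2 * s * ((t:ℝ) * L))) = Real.exp (-(s * ((t:ℝ) * L))) ^ 2 := by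
    intro t
    rw [show -(2 * s * ((t:ℝ) * L)) = -(s * ((t:ℝ) * L)) + -(s * ((t:ℝ) * L)) from by ring, Real.exp_add]
    ring
  rw [idE t₁, idE t₂, idE t₃, idE0 t₁, idE0 t₂, idE0 t₃, idD t₁, idD t₂, idD t₃,
    idD0 t₁, idD0 t₂, idD0 t₃]
  set x := Real.exp (s * L) with hxdef
  set x' := Real.exp (-(s * L)) with hx'def
  set y := Real.exp (s * ((t₁:ℝ) * L)) with hydef
  set y' := Real.exp (-(s * ((t₁:ℝ) * L))) with hy'def
  set z := Real.exp (s * ((t₂:ℝ) * L)) with hzdef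
  set z' := Real.exp (-(s * ((t₂:ℝ) * L))) with hz'def
  set w := Real.exp (s * ((t₃:ℝ) * L)) with hwdef
  set w' := Real.exp (-(s * ((t₃:ℝ) * L))) with hw'def
  set e₀ := Real.exp (-(2 * β * L)) with he₀def
  have hx0 : 0 < x := Real.exp_pos _
  have hx'0 : 0 < x' := Real.exp_pos _
  have hz0 : 0 < z := Real.exp_pos _
  have hz'0 : 0 < z' := Real.exp_pos _
  have hw0 : 0 < w := Real.exp_pos _
  have hy'0 : 0 < y' := Real.exp_pos _
  have he₀0 : 0 < e₀ := Real.exp_pos _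
  have he₀1 : e₀ ≤ 1 := Real.exp_le_one_iff.mpr (by linarith [mul_pos hβ hL0])
  have hx'1 : x' ≤ 1 := Real.exp_le_one_iff.mpr (by linarith [mul_pos hs0 hL0])
  have hx1 : 1 ≤ x := Real.one_le_exp_iff.mpr (by linarith [mul_pos hs0 hL0])
  have hxx' : x * x' = 1 := by rw [hxdef, hx'def, ← Real.exp_add]; simp
  have hzz' : z * z' = 1 := by rw [hzdef, hz'def, ← Real.exp_add]; simp
  have hw_lb : z * x ≤ w := by
    rw [hzdef, hxdef, hwdef, ← Real.exp_add]
    refine Real.exp_le_exp.mpr ?_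
    have h := mul_le_mul_of_nonneg_left hT23 (mul_pos hs0 hL0).le
    linarith [h]
  have hy'_lb : z' * x ≤ y' := by
    rw [hz'def, hxdef, hy'def, ← Real.exp_add]
    refine Real.exp_le_exp.mpr ?_
    have h := mul_le_mul_of_nonneg_left hT12 (mul_pos hs0 hL0).le
    linarith [h]
  set W := Real.exp (2 * (m - β) * L) with hWdef
  have hW1 : 1 + 2 * (m - β) * L ≤ W := by
    have := Real.add_one_le_exp (2 * (m - β) * L); linarith
  have hW1' : (1:ℝ) ≤ W := by linarith [hW1, mul_pos hmβ hL0]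
  have he₀x : W ≤ e₀ * x ^ 2 := by
    rw [hWdef, he₀def, hxdef, sq, ← Real.exp_add, ← Real.exp_add]
    exact Real.exp_le_exp.mpr (by linarith [mul_le_mul_of_nonneg_right hms hL0.le, mul_pos hβ hL0])
  have hxlb : (1 + s * L / 2) ^ 2 ≤ x := by
    have h1 := Real.add_one_le_exp (s * L / 2)
    have h2 : Real.exp (s * L / 2) * Real.exp (s * L / 2) = x := by
      rw [hxdef, ← Real.exp_add]; ring_nf
    have h0 : (0:ℝ) ≤ s * L / 2 + 1 := by linarith [mul_pos hs0 hL0]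
    have h3 := mul_self_le_mul_self h0 h1
    rw [h2] at h3
    linarith [h3]
  have hx2 : (0:ℝ) ≤ x ^ 2 - 1 := by linarith [hx1, sq_nonneg (x - 1)]
  have hx'2 : (0:ℝ) ≤ 1 - x' ^ 2 := by linarith [mul_self_le_mul_self hx'0.le hx'1]
  have hAcore : W * (z ^ 2 * x ^ 2 - z ^ 2) ≤ e₀ * (w ^ 2 * x ^ 2 - w ^ 2) := by
    have h1 : z ^ 2 * x ^ 2 ≤ w ^ 2 := by linarith [mul_self_le_mul_self (mul_pos hz0 hx0).le hw_lb]
    calc W * (z ^ 2 * x ^ 2 - z ^ 2) = (x ^ 2 - 1) * (W * z ^ 2) := by ring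
      _ ≤ (x ^ 2 - 1) * ((e₀ * x ^ 2) * z ^ 2) := mul_le_mul_of_nonneg_left (mul_le_mul_of_nonneg_right he₀x (sq_nonneg z)) hx2
      _ = (e₀ * (x ^ 2 - 1)) * (z ^ 2 * x ^ 2) := by ring
      _ ≤ (e₀ * (x ^ 2 - 1)) * w ^ 2 :=
          mul_le_mul_of_nonneg_left h1 (mul_nonneg he₀0.le hx2)
      _ = e₀ * (w ^ 2 * x ^ 2 - w ^ 2) := by ring
  have hBcore : W * (z' ^ 2 - z' ^ 2 * x' ^ 2) ≤ e₀ * (y' ^ 2 - y' ^ 2 * x' ^ 2) := by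
    have h1 : z' ^ 2 * x ^ 2 ≤ y' ^ 2 := by
      linarith [mul_self_le_mul_self (mul_pos hz'0 hx0).le hy'_lb]
    have h2 : (0:ℝ) ≤ 1 - x' ^ 2 := hx'2
    calc W * (z' ^ 2 - z' ^ 2 * x' ^ 2) = (1 - x' ^ 2) * (W * z' ^ 2) := by ring
      _ ≤ (1 - x' ^ 2) * ((e₀ * x ^ 2) * z' ^ 2) := mul_le_mul_of_nonneg_left (mul_le_mul_of_nonneg_right he₀x (sq_nonneg z')) hx'2
      _ = (e₀ * (1 - x' ^ 2)) * (z' ^ 2 * x ^ 2) := by ring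
      _ ≤ (e₀ * (1 - x' ^ 2)) * y' ^ 2 :=
          mul_le_mul_of_nonneg_left h1 (mul_nonneg he₀0.le h2)
      _ = e₀ * (y' ^ 2 - y' ^ 2 * x' ^ 2) := by ring
  set xh := Real.exp (s * L / 2) with hxhdef
  set xh' := Real.exp (-(s * L / 2)) with hxh'def
  have hxh2 : xh ^ 2 = x := by
    rw [hxhdef, hxdef, sq, ← Real.exp_add]; ring_nf
  have hxh'2 : xh' ^ 2 = x' := by
    rw [hxh'def, hx'def, sq, ← Real.exp_add]; ring_nf
  have hxhh' : xh * xh' = 1 := by rw [hxhdef, hxh'def, ← Real.exp_add]; simp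
  set b := aP * (z * xh) with hbdef
  set cc := aM * (z' * xh') with hccdef
  have hbc : b * cc = aP * aM := by
    have h : b * cc = aP * aM * ((z * z') * (xh * xh')) := by ring
    rw [h, hzz', hxhh']; ring
  have e1 : aP ^ 2 * (z ^ 2 * x ^ 2 - z ^ 2) = (x - x') * b ^ 2 := by
    have h : (x - x') * b ^ 2 = aP ^ 2 * z ^ 2 * (xh ^ 2 * x - xh ^ 2 * x') := by ring
    rw [h, hxh2]
    linear_combination (aP ^ 2 * z ^ 2) * hxx'
  have e2 : aM ^ 2 * (z' ^ 2 - z' ^ 2 * x' ^ 2) = (x - x') * cc ^ 2 := by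
    have h : (x - x') * cc ^ 2 = aM ^ 2 * z' ^ 2 * (xh' ^ 2 * x - xh' ^ 2 * x') := by ring
    rw [h, hxh'2]
    linear_combination (-(aM ^ 2 * z' ^ 2)) * hxx'
  have h2abs : 2 * |aP * aM| ≤ b ^ 2 + cc ^ 2 := by
    have h := two_mul_le_add_sq |b| |cc|
    rw [mul_assoc, ← abs_mul, hbc] at h
    simpa [sq_abs] using h
  have hWx : 2 * s * L ≤ (W - 1) * (x - x') := by
    have f1 : 2 * (m - β) * L ≤ W - 1 := by linarith
    have f2 : s ^ 2 * L ^ 2 / 4 ≤ x - x' := by linarith [hxlb, hx'1, mul_pos hs0 hL0]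
    have f3 : (2 * (m - β) * L) * (s ^ 2 * L ^ 2 / 4) ≤ (W - 1) * (x - x') := by
      apply mul_le_mul f1 f2 (by positivity) (by linarith)
    have f4 : 2 * s * L ≤ (2 * (m - β) * L) * (s ^ 2 * L ^ 2 / 4) := by
      have hA4 : 4 ≤ (m - β) * s * L ^ 2 := by
        linarith [hL4, mul_nonneg (mul_nonneg hmβ.le (sq_nonneg L)) (sub_nonneg.2 hms)]
      have := mul_le_mul_of_nonneg_right hA4 (mul_pos hs0 hL0).le
      linarith [this]
    linarith
  have hWxnn : (0:ℝ) ≤ 2 * s * L := by positivity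
  have hC : 2 * aP * aM * L - 2 * (e₀ * (2 * aP * aM * L)) ≤
      (W - 1) * (aP ^ 2 / (2 * s) * (z ^ 2 * x ^ 2 - z ^ 2)
        + aM ^ 2 / (2 * s) * (z' ^ 2 - z' ^ 2 * x' ^ 2)) := by
    have habs1 : 2 * aP * aM * L - 2 * (e₀ * (2 * aP * aM * L)) ≤ 2 * L * |aP * aM| := by
      have h := le_abs_self ((1 - 2 * e₀) * (2 * aP * aM * L))
      rw [abs_mul] at h
      have h6 : |1 - 2 * e₀| ≤ 1 := abs_le.mpr ⟨by linarith, by linarith⟩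
      have h7 : |2 * aP * aM * L| = 2 * L * |aP * aM| := by
        rw [show 2 * aP * aM * L = (2 * L) * (aP * aM) from by ring, abs_mul,
          abs_of_nonneg (by linarith : (0:ℝ) ≤ 2 * L)]
      rw [h7] at h
      have h8 := mul_le_mul_of_nonneg_right h6
        (mul_nonneg (mul_nonneg (by norm_num : (0:ℝ) ≤ 2) hL0.le) (abs_nonneg (aP * aM)))
      linarith [h, h8]
    have eSum : aP ^ 2 * (z ^ 2 * x ^ 2 - z ^ 2) + aM ^ 2 * (z' ^ 2 - z' ^ 2 * x' ^ 2)
        = (x - x') * (b ^ 2 + cc ^ 2) := by linear_combination e1 + e2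
    have hrhs : (W - 1) * (aP ^ 2 / (2 * s) * (z ^ 2 * x ^ 2 - z ^ 2)
        + aM ^ 2 / (2 * s) * (z' ^ 2 - z' ^ 2 * x' ^ 2))
        = ((W - 1) * (x - x')) * (b ^ 2 + cc ^ 2) / (2 * s) := by
      rw [show aP ^ 2 / (2 * s) * (z ^ 2 * x ^ 2 - z ^ 2)
          + aM ^ 2 / (2 * s) * (z' ^ 2 - z' ^ 2 * x' ^ 2)
          = (aP ^ 2 * (z ^ 2 * x ^ 2 - z ^ 2) + aM ^ 2 * (z' ^ 2 - z' ^ 2 * x' ^ 2)) / (2 * s)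
          from by ring, eSum]
      ring
    rw [hrhs]
    have hmul : (2 * s * L) * (2 * |aP * aM|) ≤ ((W - 1) * (x - x')) * (b ^ 2 + cc ^ 2) :=
      mul_le_mul hWx h2abs (by positivity) (le_trans hWxnn hWx)
    have heq : (2 * s * L) * (2 * |aP * aM|) / (2 * s) = 2 * L * |aP * aM| := by
      field_simp
    have hdiv : (2 * s * L) * (2 * |aP * aM|) / (2 * s) ≤
        ((W - 1) * (x - x')) * (b ^ 2 + cc ^ 2) / (2 * s) :=
      (div_le_div_iff_of_pos_right (show (0:ℝ) < 2 * s by linarith)).mpr hmul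
    rw [heq] at hdiv
    linarith [hdiv, habs1]
  have hPnn : (0:ℝ) ≤ aP ^ 2 / (2 * s) := div_nonneg (sq_nonneg aP) (by linarith)
  have hQnn : (0:ℝ) ≤ aM ^ 2 / (2 * s) := div_nonneg (sq_nonneg aM) (by linarith)
  have hA := mul_le_mul_of_nonneg_left hAcore hPnn
  have hB := mul_le_mul_of_nonneg_left hBcore hQnn
  have hp1 : 0 ≤ e₀ * (aP ^ 2 / (2 * s) * (y ^ 2 * x ^ 2 - y ^ 2)) :=
    mul_nonneg he₀0.le (mul_nonneg hPnn (by linarith [mul_nonneg (sq_nonneg y) hx2]))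
  have hd3 : 0 ≤ e₀ * (aM ^ 2 / (2 * s) * (w' ^ 2 - w' ^ 2 * x' ^ 2)) :=
    mul_nonneg he₀0.le (mul_nonneg hQnn (by linarith [mul_nonneg (sq_nonneg w') hx'2]))
  linarith [hA, hB, hC, hp1, hd3]
end

section
/- Let m > 0 and 0 < β < m. There exists L₀ > 0 (depending only on β and m) such that the following holds for every L ≥ L₀. Let (μᵢ)_{i≥1} be real numbers with μᵢ ≥ m² for all i, let (aᵢ⁺), (aᵢ⁻) be real sequences, let c ∈ ℝ, and let t₁ < t₂ < t₃ be natural numbers. Let β' > 0 satisfy β' ≤ β and exp(2β'L)·(t₂² + t₂ + 1/3) ≤ t₃² + t₃ + 1/3. Assume that for j = 1,2,3 the series Σᵢ ∫_{t_jL}^{(t_j+1)L} (aᵢ⁺ e^{√μᵢ r} + aᵢ⁻ e^{−√μᵢ r})² dr converges, and define N_j = ( c²·∫_{t_jL}^{(t_j+1)L} r² dr + Σᵢ ∫_{t_jL}^{(t_j+1)L} (aᵢ⁺ e^{√μᵢ r} + aᵢ⁻ e^{−√μᵢ r})² dr )^{1/2}. Then N₂ ≤ exp(−β'L)·(N₁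 + N₃). -/
open MeasureTheory Real


set_option maxHeartbeats 1000000 in
private lemma sqrt_add_le' (x y : ℝ) (hx : 0 ≤ x) (hy : 0 ≤ y) :
    Real.sqrt (x + y) ≤ Real.sqrt x + Real.sqrt y := by
  rw [show Real.sqrt x + Real.sqrt y = Real.sqrt ((Real.sqrt x + Real.sqrt y) ^ 2) from
    (Real.sqrt_sq (by positivity)).symm]
  apply Real.sqrt_le_sqrt
  nlinarith [Real.sq_sqrt hx, Real.sq_sqrt hy, Real.sqrt_nonneg x, Real.sqrt_nonneg y]

private lemma sinh_ratio (m β L x y : ℝ) (hβ : 0 < β) (hβm : β < m)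
    (hL : Real.log 2 / (4 * m) + Real.log 8 / (2 * (m - β)) ≤ L)
    (hx : m * L ≤ x) (hy : m * L ≤ y) :
    Real.sinh x ^ 2 + Real.sinh y ^ 2 ≤ Real.exp (-(2 * β * L)) * Real.sinh (x + y) ^ 2 := by
  have hm : 0 < m := hβ.trans hβm
  have hmb : 0 < m - β := by linarith
  have hlog2 : 0 < Real.log 2 := Real.log_pos (by norm_num)
  have hlog8 : 0 < Real.log 8 := Real.log_pos (by norm_num)
  have hL1 : Real.log 2 ≤ 4 * m * L := by
    have h1 : Real.log 2 / (4 * m) ≤ L := by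
      have : 0 < Real.log 8 / (2 * (m - β)) := by positivity
      linarith
    rw [div_le_iff₀ (by positivity)] at h1; linarith
  have hL2 : Real.log 8 ≤ 2 * (m - β) * L := by
    have h1 : Real.log 8 / (2 * (m - β)) ≤ L := by
      have : 0 < Real.log 2 / (4 * m) := by positivity
      linarith
    rw [div_le_iff₀ (by positivity)] at h1; linarith
  have hLpos : 0 < L := by
    have : 0 < Real.log 2 / (4 * m) := by positivity
    have : 0 < Real.log 8 / (2 * (m - β)) := by positivity
    linarith
  have hmL : 0 < m * L := by positivity
  have hx0 : 0 < x := lt_of_lt_of_le hmL hx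
  have hy0 : 0 < y := lt_of_lt_of_le hmL hy
  -- exp (-(4mL)) ≤ 1/2
  have e4 : Real.exp (-(4 * m * L)) ≤ 1 / 2 :=
    calc Real.exp (-(4 * m * L)) ≤ Real.exp (-Real.log 2) := Real.exp_le_exp.2 (by linarith)
      _ = 1 / 2 := by rw [Real.exp_neg, Real.exp_log (by norm_num : (0:ℝ) < 2)]; norm_num
  -- exp (-(2(m-β)L)) ≤ 1/8
  have e8 : Real.exp (-(2 * (m - β) * L)) ≤ 1 / 8 :=
    calc Real.exp (-(2 * (m - β) * L)) ≤ Real.exp (-Real.log 8) := Real.exp_le_exp.2 (by linarith)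
      _ = 1 / 8 := by rw [Real.exp_neg, Real.exp_log (by norm_num : (0:ℝ) < 8)]; norm_num
  -- lower bound for sinh (x+y)
  have hD : Real.exp (x + y) / 4 ≤ Real.sinh (x + y) := by
    have hinv : Real.exp (-(x + y)) ≤ 1 / 2 * Real.exp (x + y) := by
      have h1 : Real.exp (-(x + y)) = Real.exp (x + y) * Real.exp (-(2 * (x + y))) := by
        rw [← Real.exp_add]; ring_nf
      have h2 : Real.exp (-(2 * (x + y))) ≤ Real.exp (-(4 * m * L)) :=
        Real.exp_le_exp.2 (by linarith)
      have h3 : (0:ℝ) < Real.exp (x + y) := Real.exp_pos _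
      calc Real.exp (-(x + y)) = Real.exp (x + y) * Real.exp (-(2 * (x + y))) := h1
        _ ≤ Real.exp (x + y) * (1 / 2) := by nlinarith
        _ = 1 / 2 * Real.exp (x + y) := by ring
    rw [Real.sinh_eq]; linarith
  -- upper bounds for sinh x, sinh y
  have hsx : Real.sinh x ≤ Real.exp (x + y) * Real.exp (-(m * L)) / 2 := by
    have h1 : Real.sinh x ≤ Real.exp x / 2 := by
      rw [Real.sinh_eq]; have := (Real.exp_pos (-x)).le; linarith
    have h2 : Real.exp x ≤ Real.exp (x + y) * Real.exp (-(m * L)) := by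
      rw [← Real.exp_add]; exact Real.exp_le_exp.2 (by linarith)
    linarith
  have hsy : Real.sinh y ≤ Real.exp (x + y) * Real.exp (-(m * L)) / 2 := by
    have h1 : Real.sinh y ≤ Real.exp y / 2 := by
      rw [Real.sinh_eq]; have := (Real.exp_pos (-y)).le; linarith
    have h2 : Real.exp y ≤ Real.exp (x + y) * Real.exp (-(m * L)) := by
      rw [← Real.exp_add]; exact Real.exp_le_exp.2 (by linarith)
    linarith
  have hsx0 : 0 ≤ Real.sinh x := (Real.sinh_pos_iff.2 hx0).le
  have hsy0 : 0 ≤ Real.sinh y := (Real.sinh_pos_iff.2 hy0).le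
  -- key exponential comparison
  have hKey : Real.exp (-(m * L)) ^ 2 ≤ Real.exp (-(2 * β * L)) * (1 / 8) := by
    have h1 : Real.exp (-(m * L)) ^ 2 =
        Real.exp (-(2 * β * L)) * Real.exp (-(2 * (m - β) * L)) := by
      rw [sq, ← Real.exp_add, ← Real.exp_add]; ring_nf
    rw [h1]
    have := (Real.exp_pos (-(2 * β * L))).le
    nlinarith
  have hE : 0 < Real.exp (x + y) := Real.exp_pos _
  have hEm : 0 < Real.exp (-(m * L)) := Real.exp_pos _
  have hEb : 0 < Real.exp (-(2 * β * L)) := Real.exp_pos _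
  have b1 : Real.sinh x ^ 2 ≤ (Real.exp (x + y) * Real.exp (-(m * L)) / 2) ^ 2 := pow_le_pow_left₀ hsx0 hsx 2
  have b2 : Real.sinh y ^ 2 ≤ (Real.exp (x + y) * Real.exp (-(m * L)) / 2) ^ 2 :=
    pow_le_pow_left₀ hsy0 hsy 2
  have b3 : (Real.exp (x + y) / 4) ^ 2 ≤ Real.sinh (x + y) ^ 2 :=
    pow_le_pow_left₀ (by positivity) hD 2
  have b4 : Real.exp (-(2 * β * L)) * (Real.exp (x + y) / 4) ^ 2 ≤
      Real.exp (-(2 * β * L)) * Real.sinh (x + y) ^ 2 :=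
    mul_le_mul_of_nonneg_left b3 hEb.le
  have b5 : Real.exp (x + y) ^ 2 * Real.exp (-(m * L)) ^ 2 / 2 ≤
      Real.exp (-(2 * β * L)) * Real.exp (x + y) ^ 2 / 16 := by
    have h := mul_le_mul_of_nonneg_left hKey
      (by positivity : (0:ℝ) ≤ Real.exp (x + y) ^ 2 / 2)
    nlinarith [h]
  linarith [b1, b2, b4, b5]


private lemma L0_pos (m β : ℝ) (hβ : 0 < β) (hβm : β < m) :
    0 < Real.log 2 / (4 * m) + Real.log 8 / (2 * (m - β)) := by
  have hm : 0 < m := hβ.trans hβm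
  have hmb : 0 < m - β := by linarith
  have hlog2 : 0 < Real.log 2 := Real.log_pos (by norm_num)
  have hlog8 : 0 < Real.log 8 := Real.log_pos (by norm_num)
  positivity



private lemma pointwise_bound (m β L lam s s' a b : ℝ) (hβ : 0 < β) (hβm : β < m)
    (hL : Real.log 2 / (4 * m) + Real.log 8 / (2 * (m - β)) ≤ L)
    (hlam : m ≤ lam) (hs : L ≤ s) (hs' : L ≤ s') (r : ℝ) :
    (a * Real.exp (lam * r) + b * Real.exp (-lam * r)) ^ 2 ≤
      Real.exp (-(2 * β * L)) *
        ((a * Real.exp (lam * (r + s)) + b * Real.exp (-lam * (r + s))) ^ 2 +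
         (a * Real.exp (lam * (r - s')) + b * Real.exp (-lam * (r - s'))) ^ 2) := by
  have hm : 0 < m := hβ.trans hβm
  have hLpos : 0 < L := lt_of_lt_of_le (L0_pos m β hβ hβm) hL
  have hlam0 : 0 < lam := lt_of_lt_of_le hm hlam
  have hs0 : 0 < s := lt_of_lt_of_le hLpos hs
  have hs'0 : 0 < s' := lt_of_lt_of_le hLpos hs'
  set u := a * Real.exp (lam * (r + s)) + b * Real.exp (-lam * (r + s)) with hu
  set v := a * Real.exp (lam * (r - s')) + b * Real.exp (-lam * (r - s')) with hv
  set f := a * Real.exp (lam * r) + b * Real.exp (-lam * r) with hf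
  set α := Real.sinh (lam * s') with hα
  set γ := Real.sinh (lam * s) with hγ
  set D := Real.sinh (lam * (s + s')) with hDdef
  have hid : D * f = α * u + γ * v := by
    rw [hu, hv, hf, hα, hγ, hDdef]
    simp only [Real.sinh_eq, mul_add, mul_sub, neg_mul, neg_add, neg_sub, Real.exp_add,
      Real.exp_sub, Real.exp_neg]
    have h1 := Real.exp_ne_zero (lam * r)
    have h2 := Real.exp_ne_zero (lam * s)
    have h3 := Real.exp_ne_zero (lam * s')
    field_simp
    ring
  have hratio : α ^ 2 + γ ^ 2 ≤ Real.exp (-(2 * β * L)) * D ^ 2 := by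
    have h := sinh_ratio m β L (lam * s') (lam * s) hβ hβm hL
      (by nlinarith) (by nlinarith)
    rw [show lam * s' + lam * s = lam * (s + s') by ring] at h
    exact h
  have hD : 0 < D := Real.sinh_pos_iff.2 (by positivity)
  have hCS : (α * u + γ * v) ^ 2 ≤ (α ^ 2 + γ ^ 2) * (u ^ 2 + v ^ 2) := by
    nlinarith [sq_nonneg (α * v - γ * u)]
  have huv : 0 ≤ u ^ 2 + v ^ 2 := by positivity
  have h1 : D ^ 2 * f ^ 2 ≤ D ^ 2 * (Real.exp (-(2 * β * L)) * (u ^ 2 + v ^ 2)) := by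
    have h2 : D ^ 2 * f ^ 2 = (α * u + γ * v) ^ 2 := by rw [← mul_pow, hid]
    have h3 : (α ^ 2 + γ ^ 2) * (u ^ 2 + v ^ 2) ≤
        Real.exp (-(2 * β * L)) * D ^ 2 * (u ^ 2 + v ^ 2) :=
      mul_le_mul_of_nonneg_right hratio huv
    calc D ^ 2 * f ^ 2 = (α * u + γ * v) ^ 2 := h2
      _ ≤ (α ^ 2 + γ ^ 2) * (u ^ 2 + v ^ 2) := hCS
      _ ≤ Real.exp (-(2 * β * L)) * D ^ 2 * (u ^ 2 + v ^ 2) := h3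
      _ = D ^ 2 * (Real.exp (-(2 * β * L)) * (u ^ 2 + v ^ 2)) := by ring
  exact le_of_mul_le_mul_left h1 (by positivity)

private lemma mode_integral_s1 (m β β' L lam a b : ℝ) (hβ : 0 < β) (hβm : β < m)
    (hL : Real.log 2 / (4 * m) + Real.log 8 / (2 * (m - β)) ≤ L)
    (hlam : m ≤ lam) (hβ' : 0 < β') (hβ'β : β' ≤ β)
    (t₁ t₂ t₃ : ℕ) (h12 : t₁ < t₂) (h23 : t₂ < t₃) :
    (∫ r in ((t₂ : ℝ) * L)..(((t₂ : ℝ) + 1) * L),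
        (a * Real.exp (lam * r) + b * Real.exp (-lam * r)) ^ 2) ≤
      Real.exp (-(2 * β' * L)) *
        ((∫ r in ((t₁ : ℝ) * L)..(((t₁ : ℝ) + 1) * L),
            (a * Real.exp (lam * r) + b * Real.exp (-lam * r)) ^ 2) +
         (∫ r in ((t₃ : ℝ) * L)..(((t₃ : ℝ) + 1) * L),
            (a * Real.exp (lam * r) + b * Real.exp (-lam * r)) ^ 2)) := by
  have hLpos : 0 < L := lt_of_lt_of_le (L0_pos m β hβ hβm) hL
  set F : ℝ → ℝ := fun r => (a * Real.exp (lam * r) + b * Real.exp (-lam * r)) ^ 2 with hF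
  have hFc : Continuous F := by rw [hF]; fun_prop
  set s : ℝ := ((t₃ : ℝ) - (t₂ : ℝ)) * L with hsdef
  set s' : ℝ := ((t₂ : ℝ) - (t₁ : ℝ)) * L with hs'def
  have h23' : (t₂ : ℝ) + 1 ≤ (t₃ : ℝ) := by exact_mod_cast Nat.succ_le_of_lt h23
  have h12' : (t₁ : ℝ) + 1 ≤ (t₂ : ℝ) := by exact_mod_cast Nat.succ_le_of_lt h12
  have hs : L ≤ s := by rw [hsdef]; nlinarith
  have hs' : L ≤ s' := by rw [hs'def]; nlinarith
  have hab : (t₂ : ℝ) * L ≤ ((t₂ : ℝ) + 1) * L := by nlinarith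
  have hab1 : (t₁ : ℝ) * L ≤ ((t₁ : ℝ) + 1) * L := by nlinarith
  have hab3 : (t₃ : ℝ) * L ≤ ((t₃ : ℝ) + 1) * L := by nlinarith
  have hint2 : IntervalIntegrable F volume ((t₂ : ℝ) * L) (((t₂ : ℝ) + 1) * L) :=
    hFc.intervalIntegrable _ _
  have hGc : Continuous fun r => Real.exp (-(2 * β * L)) * (F (r + s) + F (r - s')) := by
    fun_prop
  have hmono : (∫ r in ((t₂ : ℝ) * L)..(((t₂ : ℝ) + 1) * L), F r) ≤
      ∫ r in ((t₂ : ℝ) * L)..(((t₂ : ℝ) + 1) * L),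
        Real.exp (-(2 * β * L)) * (F (r + s) + F (r - s')) := by
    apply intervalIntegral.integral_mono_on hab hint2 (hGc.intervalIntegrable _ _)
    intro x _
    exact pointwise_bound m β L lam s s' a b hβ hβm hL hlam hs hs' x
  have hsplit : (∫ r in ((t₂ : ℝ) * L)..(((t₂ : ℝ) + 1) * L),
      Real.exp (-(2 * β * L)) * (F (r + s) + F (r - s'))) =
      Real.exp (-(2 * β * L)) *
        ((∫ r in ((t₂ : ℝ) * L)..(((t₂ : ℝ) + 1) * L), F (r + s)) +
         (∫ r in ((t₂ : ℝ) * L)..(((t₂ : ℝ) + 1) * L), F (r - s'))) := by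
    have hc3 : Continuous fun r : ℝ => F (r + s) := hFc.comp (by fun_prop)
    have hc1 : Continuous fun r : ℝ => F (r - s') := hFc.comp (by fun_prop)
    rw [intervalIntegral.integral_const_mul, intervalIntegral.integral_add
      (hc3.intervalIntegrable _ _) (hc1.intervalIntegrable _ _)]
  have hshift3 : (∫ r in ((t₂ : ℝ) * L)..(((t₂ : ℝ) + 1) * L), F (r + s)) =
      ∫ r in ((t₃ : ℝ) * L)..(((t₃ : ℝ) + 1) * L), F r := by
    rw [intervalIntegral.integral_comp_add_right]
    congr 1 <;> rw [hsdef] <;> ring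
  have hshift1 : (∫ r in ((t₂ : ℝ) * L)..(((t₂ : ℝ) + 1) * L), F (r - s')) =
      ∫ r in ((t₁ : ℝ) * L)..(((t₁ : ℝ) + 1) * L), F r := by
    rw [intervalIntegral.integral_comp_sub_right]
    congr 1 <;> rw [hs'def] <;> ring
  have hnn1 : 0 ≤ ∫ r in ((t₁ : ℝ) * L)..(((t₁ : ℝ) + 1) * L), F r :=
    intervalIntegral.integral_nonneg hab1 (fun x _ => by rw [hF]; positivity)
  have hnn3 : 0 ≤ ∫ r in ((t₃ : ℝ) * L)..(((t₃ : ℝ) + 1) * L), F r :=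
    intervalIntegral.integral_nonneg hab3 (fun x _ => by rw [hF]; positivity)
  have hexp : Real.exp (-(2 * β * L)) ≤ Real.exp (-(2 * β' * L)) :=
    Real.exp_le_exp.2 (by nlinarith)
  calc (∫ r in ((t₂ : ℝ) * L)..(((t₂ : ℝ) + 1) * L), F r)
      ≤ Real.exp (-(2 * β * L)) *
        ((∫ r in ((t₁ : ℝ) * L)..(((t₁ : ℝ) + 1) * L), F r) +
         (∫ r in ((t₃ : ℝ) * L)..(((t₃ : ℝ) + 1) * L), F r)) := by
        rw [← hshift1, ← hshift3]
        calc (∫ r in ((t₂ : ℝ) * L)..(((t₂ : ℝ) + 1) * L), F r)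
            ≤ _ := hmono
          _ = _ := hsplit
          _ = _ := by ring
    _ ≤ Real.exp (-(2 * β' * L)) *
        ((∫ r in ((t₁ : ℝ) * L)..(((t₁ : ℝ) + 1) * L), F r) +
         (∫ r in ((t₃ : ℝ) * L)..(((t₃ : ℝ) + 1) * L), F r)) :=
        mul_le_mul_of_nonneg_right hexp (by linarith)

/-- Scalar form of the three circles theorem (Theorem 6.3): the `L²`-norm `N_j` over
the tube `[t_jL,(t_j+1)L]` of a sum of a linear mode `c·r` and exponential modes
`aᵢ⁺ e^{√μᵢ r} + aᵢ⁻ e^{-√μᵢ r}` with `μᵢ ≥ m²` satisfies `N₂ ≤ e^{-β'L}(N₁ + N₃)`. -/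
theorem three_circles_scalar (m β : ℝ) (hm : 0 < m) (hβ : 0 < β) (hβm : β < m) :
    ∃ L₀ > 0, ∀ L ≥ L₀, ∀ μ : ℕ → ℝ, (∀ i, m ^ 2 ≤ μ i) →
      ∀ aP aM : ℕ → ℝ, ∀ c : ℝ, ∀ t₁ t₂ t₃ : ℕ, t₁ < t₂ → t₂ < t₃ →
      ∀ β' : ℝ, 0 < β' → β' ≤ β →
      Real.exp (2 * β' * L) * ((t₂ : ℝ) ^ 2 + (t₂ : ℝ) + 1 / 3) ≤
        (t₃ : ℝ) ^ 2 + (t₃ : ℝ) + 1 / 3 →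
      (∀ j ∈ ({t₁, t₂, t₃} : Set ℕ),
        Summable fun i : ℕ =>
          ∫ r in ((j : ℝ) * L)..(((j : ℝ) + 1) * L),
            (aP i * Real.exp (Real.sqrt (μ i) * r) +
              aM i * Real.exp (-(Real.sqrt (μ i)) * r)) ^ 2) →
      Real.sqrt (c ^ 2 * (∫ r in ((t₂ : ℝ) * L)..(((t₂ : ℝ) + 1) * L), r ^ 2) +
          ∑' i : ℕ, ∫ r in ((t₂ : ℝ) * L)..(((t₂ : ℝ) + 1) * L),
            (aP i * Real.exp (Real.sqrt (μ i) * r) +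
              aM i * Real.exp (-(Real.sqrt (μ i)) * r)) ^ 2) ≤
        Real.exp (-(β' * L)) *
          (Real.sqrt (c ^ 2 * (∫ r in ((t₁ : ℝ) * L)..(((t₁ : ℝ) + 1) * L), r ^ 2) +
              ∑' i : ℕ, ∫ r in ((t₁ : ℝ) * L)..(((t₁ : ℝ) + 1) * L),
                (aP i * Real.exp (Real.sqrt (μ i) * r) +
                  aM i * Real.exp (-(Real.sqrt (μ i)) * r)) ^ 2) +
           Real.sqrt (c ^ 2 * (∫ r in ((t₃ : ℝ) * L)..(((t₃ : ℝ) + 1) * L), r ^ 2) +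
              ∑' i : ℕ, ∫ r in ((t₃ : ℝ) * L)..(((t₃ : ℝ) + 1) * L),
                (aP i * Real.exp (Real.sqrt (μ i) * r) +
                  aM i * Real.exp (-(Real.sqrt (μ i)) * r)) ^ 2)) := by
  refine ⟨Real.log 2 / (4 * m) + Real.log 8 / (2 * (m - β)), L0_pos m β hβ hβm, ?_⟩
  intro L hL μ hμ aP aM c t₁ t₂ t₃ h12 h23 β' hβ'pos hβ'β hlin hsum
  have hLpos : 0 < L := lt_of_lt_of_le (L0_pos m β hβ hβm) hL
  have hS1 := hsum t₁ (by simp)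
  have hS2 := hsum t₂ (by simp)
  have hS3 := hsum t₃ (by simp)
  have hmode : ∀ i,
      (∫ r in ((t₂ : ℝ) * L)..(((t₂ : ℝ) + 1) * L),
        (aP i * Real.exp (Real.sqrt (μ i) * r) +
          aM i * Real.exp (-(Real.sqrt (μ i)) * r)) ^ 2) ≤
      Real.exp (-(2 * β' * L)) *
        ((∫ r in ((t₁ : ℝ) * L)..(((t₁ : ℝ) + 1) * L),
            (aP i * Real.exp (Real.sqrt (μ i) * r) +
              aM i * Real.exp (-(Real.sqrt (μ i)) * r)) ^ 2) +
         (∫ r in ((t₃ : ℝ) * L)..(((t₃ : ℝ) + 1) * L),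
            (aP i * Real.exp (Real.sqrt (μ i) * r) +
              aM i * Real.exp (-(Real.sqrt (μ i)) * r)) ^ 2)) := fun i =>
    mode_integral_s1 m β β' L (Real.sqrt (μ i)) (aP i) (aM i) hβ hβm hL
      ((Real.le_sqrt hm.le (le_trans (by positivity) (hμ i))).2 (hμ i)) hβ'pos hβ'β
      t₁ t₂ t₃ h12 h23
  have htsum :
      (∑' i : ℕ, ∫ r in ((t₂ : ℝ) * L)..(((t₂ : ℝ) + 1) * L),
        (aP i * Real.exp (Real.sqrt (μ i) * r) +
          aM i * Real.exp (-(Real.sqrt (μ i)) * r)) ^ 2) ≤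
      Real.exp (-(2 * β' * L)) *
        ((∑' i : ℕ, ∫ r in ((t₁ : ℝ) * L)..(((t₁ : ℝ) + 1) * L),
            (aP i * Real.exp (Real.sqrt (μ i) * r) +
              aM i * Real.exp (-(Real.sqrt (μ i)) * r)) ^ 2) +
         (∑' i : ℕ, ∫ r in ((t₃ : ℝ) * L)..(((t₃ : ℝ) + 1) * L),
            (aP i * Real.exp (Real.sqrt (μ i) * r) +
              aM i * Real.exp (-(Real.sqrt (μ i)) * r)) ^ 2)) := by
    calc _ ≤ ∑' i : ℕ, Real.exp (-(2 * β' * L)) *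
          ((∫ r in ((t₁ : ℝ) * L)..(((t₁ : ℝ) + 1) * L),
              (aP i * Real.exp (Real.sqrt (μ i) * r) +
                aM i * Real.exp (-(Real.sqrt (μ i)) * r)) ^ 2) +
           (∫ r in ((t₃ : ℝ) * L)..(((t₃ : ℝ) + 1) * L),
              (aP i * Real.exp (Real.sqrt (μ i) * r) +
                aM i * Real.exp (-(Real.sqrt (μ i)) * r)) ^ 2)) :=
        Summable.tsum_le_tsum hmode hS2 ((hS1.add hS3).mul_left _)
      _ = _ := by rw [tsum_mul_left, Summable.tsum_add hS1 hS3]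
  -- the linear mode
  have hr2 : ∀ t : ℕ, (∫ r in ((t : ℝ) * L)..(((t : ℝ) + 1) * L), r ^ 2) =
      L ^ 3 * ((t : ℝ) ^ 2 + (t : ℝ) + 1 / 3) := by
    intro t
    rw [integral_pow]
    norm_num
    ring
  have hlin2 : c ^ 2 * (∫ r in ((t₂ : ℝ) * L)..(((t₂ : ℝ) + 1) * L), r ^ 2) ≤
      Real.exp (-(2 * β' * L)) *
        (c ^ 2 * (∫ r in ((t₁ : ℝ) * L)..(((t₁ : ℝ) + 1) * L), r ^ 2) +
         c ^ 2 * (∫ r in ((t₃ : ℝ) * L)..(((t₃ : ℝ) + 1) * L), r ^ 2)) := by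
    rw [hr2 t₁, hr2 t₂, hr2 t₃]
    have hX2 : (t₂ : ℝ) ^ 2 + (t₂ : ℝ) + 1 / 3 ≤
        Real.exp (-(2 * β' * L)) * ((t₃ : ℝ) ^ 2 + (t₃ : ℝ) + 1 / 3) := by
      rw [Real.exp_neg, inv_mul_eq_div, le_div_iff₀ (Real.exp_pos _)]
      linarith [hlin]
    have h1 := mul_le_mul_of_nonneg_left hX2 (show (0 : ℝ) ≤ c ^ 2 * L ^ 3 by positivity)
    have h2 : (0 : ℝ) ≤ Real.exp (-(2 * β' * L)) *
        (c ^ 2 * (L ^ 3 * ((t₁ : ℝ) ^ 2 + (t₁ : ℝ) + 1 / 3))) := by positivity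
    nlinarith [h1, h2]
  -- nonnegativity
  have hord : ∀ t : ℕ, (t : ℝ) * L ≤ ((t : ℝ) + 1) * L := fun t => by nlinarith
  have hnnI : ∀ t : ℕ, (0 : ℝ) ≤ ∫ r in ((t : ℝ) * L)..(((t : ℝ) + 1) * L), r ^ 2 :=
    fun t => intervalIntegral.integral_nonneg (hord t) (fun x _ => sq_nonneg x)
  have hnnS : ∀ t : ℕ, (0 : ℝ) ≤ ∑' i : ℕ, ∫ r in ((t : ℝ) * L)..(((t : ℝ) + 1) * L),
      (aP i * Real.exp (Real.sqrt (μ i) * r) +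
        aM i * Real.exp (-(Real.sqrt (μ i)) * r)) ^ 2 :=
    fun t => tsum_nonneg fun i =>
      intervalIntegral.integral_nonneg (hord t) (fun x _ => by positivity)
  have hQ1 : (0 : ℝ) ≤ c ^ 2 * (∫ r in ((t₁ : ℝ) * L)..(((t₁ : ℝ) + 1) * L), r ^ 2) +
      ∑' i : ℕ, ∫ r in ((t₁ : ℝ) * L)..(((t₁ : ℝ) + 1) * L),
        (aP i * Real.exp (Real.sqrt (μ i) * r) +
          aM i * Real.exp (-(Real.sqrt (μ i)) * r)) ^ 2 := by
    have := hnnI t₁; have := hnnS t₁; positivity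
  have hQ3 : (0 : ℝ) ≤ c ^ 2 * (∫ r in ((t₃ : ℝ) * L)..(((t₃ : ℝ) + 1) * L), r ^ 2) +
      ∑' i : ℕ, ∫ r in ((t₃ : ℝ) * L)..(((t₃ : ℝ) + 1) * L),
        (aP i * Real.exp (Real.sqrt (μ i) * r) +
          aM i * Real.exp (-(Real.sqrt (μ i)) * r)) ^ 2 := by
    have := hnnI t₃; have := hnnS t₃; positivity
  have hQ : c ^ 2 * (∫ r in ((t₂ : ℝ) * L)..(((t₂ : ℝ) + 1) * L), r ^ 2) +
      (∑' i : ℕ, ∫ r in ((t₂ : ℝ) * L)..(((t₂ : ℝ) + 1) * L),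
        (aP i * Real.exp (Real.sqrt (μ i) * r) +
          aM i * Real.exp (-(Real.sqrt (μ i)) * r)) ^ 2) ≤
      Real.exp (-(2 * β' * L)) *
        ((c ^ 2 * (∫ r in ((t₁ : ℝ) * L)..(((t₁ : ℝ) + 1) * L), r ^ 2) +
          ∑' i : ℕ, ∫ r in ((t₁ : ℝ) * L)..(((t₁ : ℝ) + 1) * L),
            (aP i * Real.exp (Real.sqrt (μ i) * r) +
              aM i * Real.exp (-(Real.sqrt (μ i)) * r)) ^ 2) +
         (c ^ 2 * (∫ r in ((t₃ : ℝ) * L)..(((t₃ : ℝ) + 1) * L), r ^ 2) +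
          ∑' i : ℕ, ∫ r in ((t₃ : ℝ) * L)..(((t₃ : ℝ) + 1) * L),
            (aP i * Real.exp (Real.sqrt (μ i) * r) +
              aM i * Real.exp (-(Real.sqrt (μ i)) * r)) ^ 2)) := by
    nlinarith [htsum, hlin2]
  calc Real.sqrt _ ≤ Real.sqrt (Real.exp (-(2 * β' * L)) * (_ + _)) := Real.sqrt_le_sqrt hQ
    _ = Real.exp (-(β' * L)) * Real.sqrt (_ + _) := by
        rw [show Real.exp (-(2 * β' * L)) = Real.exp (-(β' * L)) ^ 2 by
            rw [← Real.exp_nat_mul]; ring_nf,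
          Real.sqrt_mul (by positivity), Real.sqrt_sq (Real.exp_pos _).le]
    _ ≤ Real.exp (-(β' * L)) * (Real.sqrt _ + Real.sqrt _) :=
        mul_le_mul_of_nonneg_left (sqrt_add_le' _ _ hQ1 hQ3) (Real.exp_pos _).le
end

section
/- Let (x_j)_{j∈ℕ} be a sequence of nonnegative real numbers and let κ > 0 and λ ≥ κ + 1/κ be real numbers such that λ·x_j ≤ x_{j−1} + x_{j+1} for all j ≥ 1. If for some j ≥ 1 one has x_j ≥ κ·x_{j+1}, then x_{j−1} ≥ κ·x_j. -/
/-- Backward monotonicity (decreasing case of Remark 6.4): if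
`λ·x_j ≤ x_{j-1} + x_{j+1}` for all `j ≥ 1` with `κ > 0` and `λ ≥ κ + 1/κ`, then once
`x_j ≥ κ·x_{j+1}` at some `j ≥ 1`, also `x_{j-1} ≥ κ·x_j`. -/
theorem discrete_three_circles_backward (x : ℕ → ℝ) (hx : ∀ j, 0 ≤ x j)
    (κ lam : ℝ) (hκ : 0 < κ) (hlam : κ + 1 / κ ≤ lam)
    (h3c : ∀ j : ℕ, 1 ≤ j → lam * x j ≤ x (j - 1) + x (j + 1)) :
    ∀ j : ℕ, 1 ≤ j → κ * x (j + 1) ≤ x j → κ * x j ≤ x (j - 1) := by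
  intro j hj h
  have h1 := h3c j hj
  have h2 := hx j
  have h3 : (κ + 1 / κ) * x j ≤ x (j - 1) + x (j + 1) :=
    le_trans (mul_le_mul_of_nonneg_right hlam h2) h1
  have hκ' : κ ≠ 0 := ne_of_gt hκ
  have : x (j + 1) ≤ x j / κ := by
    rw [le_div_iff₀ hκ]; linarith [mul_comm κ (x (j+1))]
  have : (κ + 1 / κ) * x j ≤ x (j - 1) + x j / κ := by linarith
  have key : (κ + 1 / κ) * x j = κ * x j + x j / κ := by
    field_simp
  linarith
end

section
/- Let (x_j)_{j∈ℕ} be a sequence of nonnegative real numbers and let κ > 0 and λ ≥ κ + 1/κ be real numbers such that λ·x_j ≤ x_{j−1} + x_{j+1} for all j ≥ 1. If for some j₀ ≥ 1 one has x_{j₀} ≥ κ·x_{j₀−1}, then for all i ≥ 0, x_{j₀+i} ≥ κ^i·x_{j₀}. -/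
/-- Geometric growth consequence of the discrete three-circles inequality: if
`λ·x_j ≤ x_{j-1} + x_{j+1}` for all `j ≥ 1` with `κ > 0` and `λ ≥ κ + 1/κ`, and
`x_{j₀} ≥ κ·x_{j₀-1}` at some `j₀ ≥ 1`, then `x_{j₀+i} ≥ κ^i·x_{j₀}` for all `i`. -/
theorem discrete_three_circles_geometric_growth (x : ℕ → ℝ) (hx : ∀ j, 0 ≤ x j)
    (κ lam : ℝ) (hκ : 0 < κ) (hlam : κ + 1 / κ ≤ lam)
    (h3c : ∀ j : ℕ, 1 ≤ j → lam * x j ≤ x (j - 1) + x (j + 1)) :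
    ∀ j₀ : ℕ, 1 ≤ j₀ → κ * x (j₀ - 1) ≤ x j₀ → ∀ i : ℕ, κ ^ i * x j₀ ≤ x (j₀ + i) := by
  intro j₀ hj₀ hstart
  -- strengthened invariant: κ * x (j₀+i) ≤ x (j₀+i+1) for all i ≥ -1 (encoded via base)
  have key : ∀ i : ℕ, κ * x (j₀ + i) ≤ x (j₀ + i + 1) := by
    intro i
    induction i with
    | zero =>
      have h := h3c j₀ hj₀
      have hprev : x (j₀ - 1) ≤ x j₀ / κ := by
        rw [le_div_iff₀ hκ]
        nlinarith [hstart]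
      have hlam' : (κ + 1 / κ) * x j₀ ≤ lam * x j₀ :=
        mul_le_mul_of_nonneg_right hlam (hx j₀)
      have : (κ + 1 / κ) * x j₀ ≤ x j₀ / κ + x (j₀ + 1) := by
        calc (κ + 1 / κ) * x j₀ ≤ lam * x j₀ := hlam'
          _ ≤ x (j₀ - 1) + x (j₀ + 1) := h
          _ ≤ x j₀ / κ + x (j₀ + 1) := by linarith
      have hκ' : κ ≠ 0 := ne_of_gt hκ
      simp only [add_zero]
      have hx0 := hx j₀
      field_simp at this
      nlinarith [this, mul_pos hκ hκ, hκ]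
    | succ n ih =>
      have h := h3c (j₀ + n + 1) (by omega)
      have heq : j₀ + n + 1 - 1 = j₀ + n := by omega
      rw [heq] at h
      have hprev : x (j₀ + n) ≤ x (j₀ + n + 1) / κ := by
        rw [le_div_iff₀ hκ]
        nlinarith [ih]
      have hlam' : (κ + 1 / κ) * x (j₀ + n + 1) ≤ lam * x (j₀ + n + 1) :=
        mul_le_mul_of_nonneg_right hlam (hx _)
      have h2 : (κ + 1 / κ) * x (j₀ + n + 1) ≤ x (j₀ + n + 1) / κ + x (j₀ + n + 1 + 1) := by
        linarith
      have hx0 := hx (j₀ + n + 1)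
      have hgoal : κ * x (j₀ + n + 1) ≤ x (j₀ + n + 1 + 1) := by
        have hκ' : κ ≠ 0 := ne_of_gt hκ
        field_simp at h2
        nlinarith [h2, mul_pos hκ hκ, hκ]
      have : j₀ + (n + 1) = j₀ + n + 1 := by omega
      rw [this]
      exact hgoal
  intro i
  induction i with
  | zero => simp
  | succ n ih =>
    have hk := key n
    have hκn : (0:ℝ) ≤ κ ^ n := le_of_lt (pow_pos hκ n)
    have : κ * (κ ^ n * x j₀) ≤ κ * x (j₀ + n) :=
      mul_le_mul_of_nonneg_left ih (le_of_lt hκ)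
    have heq : j₀ + (n + 1) = j₀ + n + 1 := by omega
    rw [heq]
    calc κ ^ (n + 1) * x j₀ = κ * (κ ^ n * x j₀) := by ring
      _ ≤ κ * x (j₀ + n) := this
      _ ≤ x (j₀ + n + 1) := hk
end

section
/- Let μ > 0, let ρ ∈ ℝ with |ρ| < √μ, let K ≥ 0, and let f : ℝ → ℝ be continuous with |f(s)| ≤ K·exp(−ρ·s) for all s ∈ ℝ. Define F(t) = −(1/(2√μ))·∫_ℝ exp(−√μ·|t−s|)·f(s) ds. Then F is twice differentiable on ℝ, F''(t) − μ·F(t) = f(t) for all t ∈ ℝ, and |F(t)| ≤ K·exp(−ρ·t)/(μ − ρ²) for all t ∈ ℝ. -/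
open MeasureTheory Real

/-- Integrability transfers under `x ↦ -x` from `Ioi (-t)` to `Iic t`. -/
lemma integrableOn_neg_Ioi_to_Iic {g : ℝ → ℝ} {t : ℝ}
    (hg : MeasureTheory.IntegrableOn g (Set.Ioi (-t))) :
    MeasureTheory.IntegrableOn (fun x => g (-x)) (Set.Iic t) := by
  have A : MeasurableEmbedding fun x : ℝ => -x :=
    (Homeomorph.neg ℝ).isClosedEmbedding.measurableEmbedding
  have h1 : MeasureTheory.IntegrableOn g (Set.Ioi (-t))
      (MeasureTheory.Measure.map (fun x : ℝ => -x) volume) := by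
    rwa [MeasureTheory.Measure.map_neg_eq_self]
  have h2 := (A.integrableOn_map_iff (f := g) (s := Set.Ioi (-t))).1 h1
  have hpre : (fun x : ℝ => -x) ⁻¹' Set.Ioi (-t) = Set.Iio t := by
    ext x; simp [neg_lt_neg_iff, Set.mem_Iio]
  rw [hpre] at h2
  rw [integrableOn_Iic_iff_integrableOn_Iio]
  exact h2

/-- Integrability transfers under `x ↦ -x` from `Iic (-t)` to `Ioi t`. -/
lemma integrableOn_neg_Iic_to_Ioi {g : ℝ → ℝ} {t : ℝ}
    (hg : MeasureTheory.IntegrableOn g (Set.Iic (-t))) :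
    MeasureTheory.IntegrableOn (fun x => g (-x)) (Set.Ioi t) := by
  have A : MeasurableEmbedding fun x : ℝ => -x :=
    (Homeomorph.neg ℝ).isClosedEmbedding.measurableEmbedding
  have h1 : MeasureTheory.IntegrableOn g (Set.Iic (-t))
      (MeasureTheory.Measure.map (fun x : ℝ => -x) volume) := by
    rwa [MeasureTheory.Measure.map_neg_eq_self]
  have h2 := (A.integrableOn_map_iff (f := g) (s := Set.Iic (-t))).1 h1
  have hpre : (fun x : ℝ => -x) ⁻¹' Set.Iic (-t) = Set.Ici t := by
    ext x; simp
  rw [hpre] at h2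
  exact h2.mono_set Set.Ioi_subset_Ici_self

/-- `exp (a x)` is integrable on `Iic t` for `a > 0`. -/
lemma integrableOn_exp_mul_Iic' {a : ℝ} (ha : 0 < a) (t : ℝ) :
    MeasureTheory.IntegrableOn (fun x : ℝ => Real.exp (a * x)) (Set.Iic t) := by
  have h := exp_neg_integrableOn_Ioi (-t) ha
  have h2 := integrableOn_neg_Ioi_to_Iic (g := fun x => Real.exp (-a * x)) h
  simpa using h2

/-- `∫ x in Iic t, exp (a x) = exp (a t) / a` for `a > 0`. -/
lemma integral_exp_mul_Iic' {a : ℝ} (ha : 0 < a) (t : ℝ) :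
    ∫ x in Set.Iic t, Real.exp (a * x) = Real.exp (a * t) / a := by
  have h1 : ∫ x in Set.Iic t, Real.exp (a * x)
      = ∫ x in Set.Iic t, (fun y => Real.exp (-(a * y))) (-x) := by
    congr 1; ext x; simp
  rw [h1, integral_comp_neg_Iic t (fun y => Real.exp (-(a * y)))]
  have h2 : ∫ x in Set.Ioi (-t), Real.exp (-(a * x))
      = ∫ x in Set.Ioi (-t), (fun y => Real.exp (-y)) (a * x) := by simp
  rw [h2, MeasureTheory.integral_comp_mul_left_Ioi (fun y => Real.exp (-y)) (-t) ha]
  rw [integral_exp_neg_Ioi]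
  simp [smul_eq_mul, mul_neg, neg_neg, div_eq_inv_mul]

/-- FTC for `t ↦ ∫ s in Iic t, g s` when `g` is continuous and integrable on every `Iic t`. -/
lemma hasDerivAt_integral_Iic {g : ℝ → ℝ} (hg : Continuous g)
    (hint : ∀ t : ℝ, MeasureTheory.IntegrableOn g (Set.Iic t)) (t : ℝ) :
    HasDerivAt (fun u => ∫ s in Set.Iic u, g s) (g t) t := by
  have key : ∀ u : ℝ, ∫ s in Set.Iic u, g s
      = (∫ s in Set.Iic (0:ℝ), g s) + ∫ s in (0:ℝ)..u, g s := by
    intro u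
    rw [← intervalIntegral.integral_Iic_sub_Iic (hint 0) (hint u)]
    ring
  have hd : HasDerivAt (fun u => (∫ s in Set.Iic (0:ℝ), g s) + ∫ s in (0:ℝ)..u, g s)
      (g t) t := by
    exact (intervalIntegral.integral_hasDerivAt_right (hg.intervalIntegrable 0 t)
      (hg.stronglyMeasurableAtFilter _ _) hg.continuousAt).const_add _
  exact hd.congr_of_eventuallyEq (Filter.Eventually.of_forall key)

/-- Green's function for the mode ODE `F'' - μF = f` on the line: convolution against
`-(1/(2√μ)) e^{-√μ|t-s|}` inverts the operator and preserves the exponential weight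
`e^{-ρt}` for `|ρ| < √μ`. -/
theorem green_function_mode_ODE (μ ρ K : ℝ) (hμ : 0 < μ) (hρ : |ρ| < Real.sqrt μ)
    (hK : 0 ≤ K) (f : ℝ → ℝ) (hf : Continuous f)
    (hbd : ∀ s : ℝ, |f s| ≤ K * Real.exp (-(ρ * s)))
    (F : ℝ → ℝ)
    (hF : F = fun t => -(1 / (2 * Real.sqrt μ)) *
      ∫ s : ℝ, Real.exp (-(Real.sqrt μ) * |t - s|) * f s) :
    (∀ t, DifferentiableAt ℝ F t) ∧ (∀ t, DifferentiableAt ℝ (deriv F) t) ∧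
    (∀ t, deriv (deriv F) t - μ * F t = f t) ∧
    (∀ t, |F t| ≤ K * Real.exp (-(ρ * t)) / (μ - ρ ^ 2)) := by
  set c := Real.sqrt μ with hcdef
  have hc : 0 < c := Real.sqrt_pos.2 hμ
  have hc2 : c ^ 2 = μ := Real.sq_sqrt hμ.le
  obtain ⟨hρ1, hρ2⟩ := abs_lt.1 hρ
  have ha : 0 < c - ρ := by linarith
  have hb : 0 < c + ρ := by linarith
  -- The two half-line pieces
  set g : ℝ → ℝ := fun s => Real.exp (c * s) * f s with hgdef
  set h : ℝ → ℝ := fun u => Real.exp (c * u) * f (-u) with hhdef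
  have hgc : Continuous g := (Real.continuous_exp.comp (continuous_const.mul continuous_id)).mul hf
  have hhc : Continuous h := (Real.continuous_exp.comp (continuous_const.mul continuous_id)).mul
    (hf.comp continuous_neg)
  have hgbd : ∀ s : ℝ, |g s| ≤ K * Real.exp ((c - ρ) * s) := by
    intro s
    have : |g s| = Real.exp (c * s) * |f s| := by
      rw [hgdef]; rw [abs_mul, abs_of_pos (Real.exp_pos _)]
    rw [this]
    calc Real.exp (c * s) * |f s| ≤ Real.exp (c * s) * (K * Real.exp (-(ρ * s))) := by
          exact mul_le_mul_of_nonneg_left (hbd s) (Real.exp_pos _).le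
      _ = K * Real.exp ((c - ρ) * s) := by
            rw [mul_left_comm, ← Real.exp_add]; ring_nf
  have hhbd : ∀ u : ℝ, |h u| ≤ K * Real.exp ((c + ρ) * u) := by
    intro u
    have : |h u| = Real.exp (c * u) * |f (-u)| := by
      rw [hhdef]; rw [abs_mul, abs_of_pos (Real.exp_pos _)]
    rw [this]
    calc Real.exp (c * u) * |f (-u)| ≤ Real.exp (c * u) * (K * Real.exp (-(ρ * -u))) := by
          exact mul_le_mul_of_nonneg_left (hbd (-u)) (Real.exp_pos _).le
      _ = K * Real.exp ((c + ρ) * u) := by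
            rw [mul_left_comm, ← Real.exp_add]; ring_nf
  have hgint : ∀ t : ℝ, MeasureTheory.IntegrableOn g (Set.Iic t) := by
    intro t
    refine MeasureTheory.Integrable.mono' ((integrableOn_exp_mul_Iic ha t).const_mul K)
      hgc.aestronglyMeasurable.restrict ?_
    exact MeasureTheory.ae_of_all _ fun s => by simpa [Real.norm_eq_abs] using hgbd s
  have hhint : ∀ t : ℝ, MeasureTheory.IntegrableOn h (Set.Iic t) := by
    intro t
    refine MeasureTheory.Integrable.mono' ((integrableOn_exp_mul_Iic hb t).const_mul K)
      hhc.aestronglyMeasurable.restrict ?_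
    exact MeasureTheory.ae_of_all _ fun u => by simpa [Real.norm_eq_abs] using hhbd u
  set G : ℝ → ℝ := fun t => ∫ s in Set.Iic t, g s with hGdef
  set H : ℝ → ℝ := fun t => ∫ u in Set.Iic (-t), h u with hHdef
  -- Rewrite F in terms of G and H.
  have hFt : ∀ t : ℝ, F t = -(1 / (2 * c)) *
      (Real.exp (-(c * t)) * G t + Real.exp (c * t) * H t) := by
    intro t
    rw [hF]
    simp only
    congr 1
    -- split the integral at t
    have hIic : MeasureTheory.IntegrableOn
        (fun s => Real.exp (-c * |t - s|) * f s) (Set.Iic t) := by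
      refine MeasureTheory.IntegrableOn.congr_fun
        (((hgint t).const_mul (Real.exp (-(c * t))))) ?_ measurableSet_Iic
      intro s hs
      rw [Set.mem_Iic] at hs
      rw [hgdef]
      simp only
      rw [← mul_assoc, ← Real.exp_add, abs_of_nonneg (by linarith : (0:ℝ) ≤ t - s)]
      ring_nf
    have hIoi : MeasureTheory.IntegrableOn
        (fun s => Real.exp (-c * |t - s|) * f s) (Set.Ioi t) := by
      have h1 : MeasureTheory.IntegrableOn (fun x => h (-x)) (Set.Ioi t) :=
        integrableOn_neg_Iic_to_Ioi (hhint (-t))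
      refine MeasureTheory.IntegrableOn.congr_fun
        ((h1.const_mul (Real.exp (c * t)))) ?_ measurableSet_Ioi
      intro s hs
      rw [Set.mem_Ioi] at hs
      rw [hhdef]
      simp only [neg_neg]
      rw [← mul_assoc, ← Real.exp_add, abs_of_nonpos (by linarith : t - s ≤ 0)]
      ring_nf
    rw [← intervalIntegral.integral_Iic_add_Ioi hIic hIoi]
    congr 1
    · -- Iic part
      have : ∀ s ∈ Set.Iic t, Real.exp (-c * |t - s|) * f s
          = Real.exp (-(c * t)) * g s := by
        intro s hs
        rw [Set.mem_Iic] at hs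
        rw [hgdef]
        simp only
        rw [← mul_assoc, ← Real.exp_add, abs_of_nonneg (by linarith : (0:ℝ) ≤ t - s)]
        ring_nf
      rw [MeasureTheory.setIntegral_congr_fun measurableSet_Iic this,
        MeasureTheory.integral_const_mul]
    · -- Ioi part
      have : ∀ s ∈ Set.Ioi t, Real.exp (-c * |t - s|) * f s
          = Real.exp (c * t) * h (-s) := by
        intro s hs
        rw [Set.mem_Ioi] at hs
        rw [hhdef]
        simp only [neg_neg]
        rw [← mul_assoc, ← Real.exp_add, abs_of_nonpos (by linarith : t - s ≤ 0)]
        ring_nf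
      rw [MeasureTheory.setIntegral_congr_fun measurableSet_Ioi this,
        MeasureTheory.integral_const_mul, integral_comp_neg_Ioi t h]
  -- derivative data
  have hGd : ∀ t : ℝ, HasDerivAt G (g t) t := hasDerivAt_integral_Iic hgc hgint
  have hHd : ∀ t : ℝ, HasDerivAt H (-(h (-t))) t := by
    intro t
    have h1 : HasDerivAt (fun u => ∫ s in Set.Iic u, h s) (h (-t)) (-t) :=
      hasDerivAt_integral_Iic hhc hhint (-t)
    have h2 : HasDerivAt (fun x : ℝ => -x) (-1 : ℝ) t := (hasDerivAt_id t).neg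
    have := h1.comp t h2
    simpa [mul_comm, Function.comp_def] using this
  have hE1 : ∀ t : ℝ, HasDerivAt (fun u => Real.exp (-(c * u))) (-c * Real.exp (-(c * t))) t := by
    intro t
    have h0 : HasDerivAt (fun u : ℝ => -(c * u)) (-c) t := by
      simpa [Pi.neg_def] using ((hasDerivAt_id t).const_mul c).neg
    simpa [mul_comm] using h0.exp
  have hE2 : ∀ t : ℝ, HasDerivAt (fun u => Real.exp (c * u)) (c * Real.exp (c * t)) t := by
    intro t
    have h0 : HasDerivAt (fun u : ℝ => c * u) c t := by
      simpa using (hasDerivAt_id t).const_mul c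
    simpa [mul_comm] using h0.exp
  have hcancel : ∀ t : ℝ, Real.exp (-(c * t)) * Real.exp (c * t) = 1 := by
    intro t; rw [← Real.exp_add]; simp
  have hexpg : ∀ t : ℝ, Real.exp (-(c * t)) * g t = f t := by
    intro t
    simp only [hgdef]
    rw [← mul_assoc, ← Real.exp_add]
    have e : -(c * t) + c * t = 0 := by ring
    rw [e, Real.exp_zero, one_mul]
  have hexph : ∀ t : ℝ, Real.exp (c * t) * h (-t) = f t := by
    intro t
    simp only [hhdef, neg_neg]
    rw [← mul_assoc, ← Real.exp_add]
    have e : c * t + c * -t = 0 := by ring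
    rw [e, Real.exp_zero, one_mul]
  -- first derivative
  have hFd : ∀ t : ℝ, HasDerivAt F
      (-(1 / (2 * c)) * c * (Real.exp (c * t) * H t - Real.exp (-(c * t)) * G t)) t := by
    intro t
    have hA : HasDerivAt (fun u => Real.exp (-(c * u)) * G u)
        (-c * Real.exp (-(c * t)) * G t + Real.exp (-(c * t)) * g t) t :=
      (hE1 t).mul (hGd t)
    have hB : HasDerivAt (fun u => Real.exp (c * u) * H u)
        (c * Real.exp (c * t) * H t + Real.exp (c * t) * -(h (-t))) t :=
      (hE2 t).mul (hHd t)
    have hD : HasDerivAt (fun u => -(1 / (2 * c)) *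
        (Real.exp (-(c * u)) * G u + Real.exp (c * u) * H u))
        (-(1 / (2 * c)) * ((-c * Real.exp (-(c * t)) * G t + Real.exp (-(c * t)) * g t)
          + (c * Real.exp (c * t) * H t + Real.exp (c * t) * -(h (-t))))) t :=
      (hA.add hB).const_mul _
    have heq : (-(1 / (2 * c)) * ((-c * Real.exp (-(c * t)) * G t + Real.exp (-(c * t)) * g t)
          + (c * Real.exp (c * t) * H t + Real.exp (c * t) * -(h (-t)))))
        = -(1 / (2 * c)) * c * (Real.exp (c * t) * H t - Real.exp (-(c * t)) * G t) := by
      have e1 := hexpg t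
      have e2 := hexph t
      linear_combination (-(1/(2*c))) * e1 + (1/(2*c)) * e2
    rw [heq] at hD
    exact hD.congr_of_eventuallyEq (Filter.Eventually.of_forall hFt)
  have hderivF : deriv F = fun t => -(1 / (2 * c)) * c *
      (Real.exp (c * t) * H t - Real.exp (-(c * t)) * G t) := by
    funext t; exact (hFd t).deriv
  -- second derivative
  have hFd2 : ∀ t : ℝ, HasDerivAt (deriv F)
      (μ * F t + f t) t := by
    intro t
    have hA : HasDerivAt (fun u => Real.exp (-(c * u)) * G u)
        (-c * Real.exp (-(c * t)) * G t + Real.exp (-(c * t)) * g t) t :=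
      (hE1 t).mul (hGd t)
    have hB : HasDerivAt (fun u => Real.exp (c * u) * H u)
        (c * Real.exp (c * t) * H t + Real.exp (c * t) * -(h (-t))) t :=
      (hE2 t).mul (hHd t)
    have hD : HasDerivAt (fun u => -(1 / (2 * c)) * c *
        (Real.exp (c * u) * H u - Real.exp (-(c * u)) * G u))
        (-(1 / (2 * c)) * c * ((c * Real.exp (c * t) * H t + Real.exp (c * t) * -(h (-t)))
          - (-c * Real.exp (-(c * t)) * G t + Real.exp (-(c * t)) * g t))) t :=
      (hB.sub hA).const_mul _
    have heq : (-(1 / (2 * c)) * c * ((c * Real.exp (c * t) * H t + Real.exp (c * t) * -(h (-t)))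
          - (-c * Real.exp (-(c * t)) * G t + Real.exp (-(c * t)) * g t)))
        = μ * F t + f t := by
      have e1 := hexpg t
      have e2 := hexph t
      have e3 := hFt t
      have hcne : c ≠ 0 := hc.ne'
      have hk : (-(1/(2*c))) * (2*c) = -1 := by field_simp
      rw [e3, ← hc2]
      linear_combination ((1/(2*c))*c) * e1 + ((1/(2*c))*c) * e2 + (-(f t)) * hk
    rw [heq] at hD
    rw [hderivF]
    exact hD
  refine ⟨fun t => (hFd t).differentiableAt, fun t => (hFd2 t).differentiableAt, ?_, ?_⟩
  · intro t
    have := (hFd2 t).deriv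
    rw [this]; ring
  · -- the bound
    intro t
    have hGbd : |G t| ≤ K * Real.exp ((c - ρ) * t) / (c - ρ) := by
      have h1 : ‖∫ s in Set.Iic t, g s‖ ≤ ∫ s in Set.Iic t, K * Real.exp ((c - ρ) * s) := by
        refine MeasureTheory.norm_integral_le_of_norm_le
          ((integrableOn_exp_mul_Iic ha t).const_mul K) ?_
        exact MeasureTheory.ae_of_all _ fun s => by simpa [Real.norm_eq_abs] using hgbd s
      rw [MeasureTheory.integral_const_mul, integral_exp_mul_Iic ha] at h1
      calc |G t| = ‖∫ s in Set.Iic t, g s‖ := by rw [Real.norm_eq_abs]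
        _ ≤ K * (Real.exp ((c - ρ) * t) / (c - ρ)) := h1
        _ = K * Real.exp ((c - ρ) * t) / (c - ρ) := by ring
    have hHbd : |H t| ≤ K * Real.exp (-((c + ρ) * t)) / (c + ρ) := by
      have h1 : ‖∫ u in Set.Iic (-t), h u‖ ≤ ∫ u in Set.Iic (-t), K * Real.exp ((c + ρ) * u) := by
        refine MeasureTheory.norm_integral_le_of_norm_le
          ((integrableOn_exp_mul_Iic hb (-t)).const_mul K) ?_
        exact MeasureTheory.ae_of_all _ fun u => by simpa [Real.norm_eq_abs] using hhbd u
      rw [MeasureTheory.integral_const_mul, integral_exp_mul_Iic hb] at h1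
      calc |H t| = ‖∫ u in Set.Iic (-t), h u‖ := by rw [Real.norm_eq_abs]
        _ ≤ K * (Real.exp ((c + ρ) * (-t)) / (c + ρ)) := h1
        _ = K * Real.exp (-((c + ρ) * t)) / (c + ρ) := by ring_nf
    have habs : |F t| ≤ (1 / (2 * c)) *
        (Real.exp (-(c * t)) * |G t| + Real.exp (c * t) * |H t|) := by
      rw [hFt t, abs_mul]
      have h1 : |(-(1 / (2 * c)))| = 1 / (2 * c) := by
        rw [abs_neg, abs_of_pos]; positivity
      rw [h1]
      refine mul_le_mul_of_nonneg_left ?_ (by positivity)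
      calc |Real.exp (-(c * t)) * G t + Real.exp (c * t) * H t|
          ≤ |Real.exp (-(c * t)) * G t| + |Real.exp (c * t) * H t| := abs_add_le _ _
        _ = Real.exp (-(c * t)) * |G t| + Real.exp (c * t) * |H t| := by
            rw [abs_mul, abs_mul, abs_of_pos (Real.exp_pos _), abs_of_pos (Real.exp_pos _)]
    have hmain : (1 / (2 * c)) *
        (Real.exp (-(c * t)) * (K * Real.exp ((c - ρ) * t) / (c - ρ))
          + Real.exp (c * t) * (K * Real.exp (-((c + ρ) * t)) / (c + ρ)))
        = K * Real.exp (-(ρ * t)) / (μ - ρ ^ 2) := by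
      have e1 : Real.exp (-(c * t)) * Real.exp ((c - ρ) * t) = Real.exp (-(ρ * t)) := by
        rw [← Real.exp_add]; ring_nf
      have e2 : Real.exp (c * t) * Real.exp (-((c + ρ) * t)) = Real.exp (-(ρ * t)) := by
        rw [← Real.exp_add]; ring_nf
      have hμρ : μ - ρ ^ 2 = (c - ρ) * (c + ρ) := by rw [← hc2]; ring
      rw [hμρ]
      have e1' : Real.exp (-(c * t)) * (K * Real.exp ((c - ρ) * t) / (c - ρ))
          = K * Real.exp (-(ρ * t)) / (c - ρ) := by rw [← e1]; ring
      have e2' : Real.exp (c * t) * (K * Real.exp (-((c + ρ) * t)) / (c + ρ))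
          = K * Real.exp (-(ρ * t)) / (c + ρ) := by rw [← e2]; ring
      rw [e1', e2']
      field_simp
      ring
    calc |F t| ≤ (1 / (2 * c)) *
        (Real.exp (-(c * t)) * |G t| + Real.exp (c * t) * |H t|) := habs
      _ ≤ (1 / (2 * c)) *
        (Real.exp (-(c * t)) * (K * Real.exp ((c - ρ) * t) / (c - ρ))
          + Real.exp (c * t) * (K * Real.exp (-((c + ρ) * t)) / (c + ρ))) := by
          refine mul_le_mul_of_nonneg_left ?_ (by positivity)
          refine add_le_add ?_ ?_
          · exact mul_le_mul_of_nonneg_left hGbd (Real.exp_pos _).le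
          · exact mul_le_mul_of_nonneg_left hHbd (Real.exp_pos _).le
      _ = K * Real.exp (-(ρ * t)) / (μ - ρ ^ 2) := hmain
end

section
/- Let μ > 0 and write a = √μ. Each of the following pairs of functions (k, ℓ) on ℝ satisfies the coupled system −k'' + 2μ·k − ℓ' = 0 and −2ℓ'' + μ·k' + μ·ℓ = 0: (i) k(r) = e^{ar}, ℓ(r) = a·e^{ar}; (ii) k(r) = −e^{−ar}, ℓ(r) = a·e^{−ar}; (iii) k(r) = r·e^{ar}, ℓ(r) = (a·r − 3)·e^{ar}; (iv) k(r) = −r·e^{−ar}, ℓ(r) = (a·r + 3)·e^{−ar}. -/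
lemma hd_aux (a c b : ℝ) (r : ℝ) :
    HasDerivAt (fun r => (c * r + b) * Real.exp (a * r))
      ((c + a * (c * r + b)) * Real.exp (a * r)) r := by
  have h1 : HasDerivAt (fun r : ℝ => a * r) a r := by
    simpa using (hasDerivAt_id r).const_mul a
  have he := h1.exp
  have hl : HasDerivAt (fun r : ℝ => c * r + b) c r := by
    simpa using ((hasDerivAt_id r).const_mul c).add_const b
  have := hl.mul he
  exact this.congr_deriv (by ring)

lemma dde (a c b : ℝ) :
    deriv (fun r => (c * r + b) * Real.exp (a * r)) =
      fun r => (c + a * (c * r + b)) * Real.exp (a * r) :=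
  funext fun r => (hd_aux a c b r).deriv

lemma dde2 (a c b : ℝ) :
    deriv (deriv (fun r => (c * r + b) * Real.exp (a * r))) =
      fun r => (a * c + a * (c + a * (c * r + b))) * Real.exp (a * r) := by
  rw [dde]
  have h : (fun r => (c + a * (c * r + b)) * Real.exp (a * r)) =
      fun r => ((a * c) * r + (c + a * b)) * Real.exp (a * r) := by
    funext r; ring
  rw [h, dde]; funext r; ring

lemma dde' (a c b d : ℝ) :
    deriv (fun r => (d + a * (c * r + b)) * Real.exp (a * r)) =
      fun r => (a * c + a * (d + a * (c * r + b))) * Real.exp (a * r) := by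
  have h : (fun r => (d + a * (c * r + b)) * Real.exp (a * r)) =
      fun r => ((a * c) * r + (d + a * b)) * Real.exp (a * r) := by
    funext r; ring
  rw [h, dde]; funext r; ring

/-- The pair `(k, ℓ)` solves the coupled mode system
`-k'' + 2μk - ℓ' = 0`, `-2ℓ'' + μk' + μℓ = 0`. -/
def SolvesCoupledSystem (μ : ℝ) (k ℓ : ℝ → ℝ) : Prop :=
  (∀ r : ℝ, -(deriv (deriv k) r) + 2 * μ * k r - deriv ℓ r = 0) ∧
  (∀ r : ℝ, -(2 * deriv (deriv ℓ) r) + μ * deriv k r + μ * ℓ r = 0)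

/-- The eigenvector solutions `η₁, η₂` and generalized-eigenvector solutions `η₃, η₄`
of the mode system (2.15)–(2.16): with `a = √μ`, the four stated pairs `(k, ℓ)` solve
`-k'' + 2μk - ℓ' = 0` and `-2ℓ'' + μk' + μℓ = 0`. -/
theorem mode_system_solutions (μ a : ℝ) (hμ : 0 < μ) (ha : a = Real.sqrt μ) :
    SolvesCoupledSystem μ (fun r => Real.exp (a * r)) (fun r => a * Real.exp (a * r)) ∧
    SolvesCoupledSystem μ (fun r => -Real.exp (-(a * r)))
      (fun r => a * Real.exp (-(a * r))) ∧
    SolvesCoupledSystem μ (fun r => r * Real.exp (a * r))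
      (fun r => (a * r - 3) * Real.exp (a * r)) ∧
    SolvesCoupledSystem μ (fun r => -(r * Real.exp (-(a * r))))
      (fun r => (a * r + 3) * Real.exp (-(a * r))) := by
  have hμa : μ = a * a := by
    rw [ha, Real.mul_self_sqrt hμ.le]
  subst hμa
  have e1 : (fun r => Real.exp (a * r)) =
      fun r => ((0 : ℝ) * r + 1) * Real.exp (a * r) := by funext r; ring
  have e2 : (fun r => a * Real.exp (a * r)) =
      fun r => ((0 : ℝ) * r + a) * Real.exp (a * r) := by funext r; ring
  have e3 : (fun r => -Real.exp (-(a * r))) =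
      fun r => ((0 : ℝ) * r + (-1)) * Real.exp ((-a) * r) := by
    funext r; rw [neg_mul]; ring
  have e4 : (fun r => a * Real.exp (-(a * r))) =
      fun r => ((0 : ℝ) * r + a) * Real.exp ((-a) * r) := by
    funext r; rw [neg_mul]; ring
  have e5 : (fun r : ℝ => r * Real.exp (a * r)) =
      fun r => ((1 : ℝ) * r + 0) * Real.exp (a * r) := by funext r; ring
  have e6 : (fun r => (a * r - 3) * Real.exp (a * r)) =
      fun r => (a * r + (-3)) * Real.exp (a * r) := by funext r; ring
  have e7 : (fun r : ℝ => -(r * Real.exp (-(a * r)))) =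
      fun r => ((-1 : ℝ) * r + 0) * Real.exp ((-a) * r) := by
    funext r; rw [neg_mul]; ring
  have e8 : (fun r => (a * r + 3) * Real.exp (-(a * r))) =
      fun r => (a * r + 3) * Real.exp ((-a) * r) := by
    funext r; rw [neg_mul]
  refine ⟨⟨?_, ?_⟩, ⟨?_, ?_⟩, ⟨?_, ?_⟩, ⟨?_, ?_⟩⟩ <;> intro r <;>
    simp only [e1, e2, e3, e4, e5, e6, e7, e8, dde, dde'] <;> ring_nf
end
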